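/- If every point of a measure space X belongs to at most N of the measurable sets (U_k)_{k∈ℕ}, then there exists a decomposition U_k = A_k^1 ∪ ⋯ ∪ A_k^N into measurable sets such that for each fixed i ∈ {1,…,N}, the sets (A_k^i)_{k∈ℕ} are pairwise disjoint. -/

import Mathlib

/-- Decomposition lemma: if every point of `X` belongs to at most `N` of the
measurable sets `U k`, there is a decomposition `U k = A k 1 ∪ ⋯ ∪ A k N` into
measurable sets such that for each fixed `i`, the sets `(A k i)_k` are pairwise
disjoint. -/
theorem stmt2 {X : Type*} [MeasurableSpace X] (N : ℕ) (U : ℕ → Set X)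
    (hU : ∀ k, MeasurableSet (U k))
    (hN : ∀ x, Set.encard {k | x ∈ U k} ≤ N) :
    ∃ A : ℕ → Fin N → Set X,
      (∀ k i, MeasurableSet (A k i)) ∧
      (∀ k, U k = ⋃ i, A k i) ∧
      (∀ i, Pairwise (Function.onFun Disjoint fun k => A k i)) := by
  classical
  set f : ℕ → X → ℕ := fun k x => ((Finset.range k).filter (fun j => x ∈ U j)).card with hf_def
  have hf : ∀ k, Measurable (f k) := by
    intro k
    have : f k = fun x => ∑ j ∈ Finset.range k, if x ∈ U j then 1 else 0 := by
      funext x; exact Finset.card_filter _ _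
    rw [this]
    exact Finset.measurable_sum _ fun j _ =>
      Measurable.ite (hU j) measurable_const measurable_const
  have hlt : ∀ k x, x ∈ U k → f k x < N := by
    intro k x hx
    have hknot : k ∉ (Finset.range k).filter (fun j => x ∈ U j) := by
      simp [Finset.mem_filter]
    set s := insert k ((Finset.range k).filter (fun j => x ∈ U j)) with hs
    have hcard : s.card = f k x + 1 := Finset.card_insert_of_notMem hknot
    have hsub : (s : Set ℕ) ⊆ {j | x ∈ U j} := by
      intro j hj
      simp only [hs, Finset.coe_insert, Set.mem_insert_iff, Finset.coe_filter,
        Set.mem_setOf_eq] at hj ⊢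
      rcases hj with rfl | ⟨_, h⟩
      · exact hx
      · exact h
    have h1 : (s : Set ℕ).encard ≤ N := le_trans (Set.encard_le_encard hsub) (hN x)
    rw [Set.encard_coe_eq_coe_finsetCard, hcard] at h1
    exact_mod_cast Nat.lt_of_succ_le (by exact_mod_cast h1)
  refine ⟨fun k i => U k ∩ {x | f k x = i.val}, ?_, ?_, ?_⟩
  · intro k i
    exact (hU k).inter (hf k (MeasurableSet.singleton (i.val : ℕ)))
  · intro k
    ext x
    simp only [Set.mem_iUnion, Set.mem_inter_iff, Set.mem_setOf_eq]
    constructor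
    · intro hx
      exact ⟨⟨f k x, hlt k x hx⟩, hx, rfl⟩
    · rintro ⟨i, hx, -⟩; exact hx
  · intro i
    have key : ∀ k l, k < l →
        Disjoint (U k ∩ {x | f k x = i.val}) (U l ∩ {x | f l x = i.val}) := by
      intro k l h
      simp only [Set.disjoint_left]
      rintro x ⟨hxk, hfk⟩ ⟨hxl, hfl⟩
      have hsub : insert k ((Finset.range k).filter (fun j => x ∈ U j)) ⊆
          (Finset.range l).filter (fun j => x ∈ U j) := by
        intro j hj
        rcases Finset.mem_insert.mp hj with rfl | hj
        · exact Finset.mem_filter.mpr ⟨Finset.mem_range.mpr h, hxk⟩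
        · obtain ⟨hj1, hj2⟩ := Finset.mem_filter.mp hj
          exact Finset.mem_filter.mpr ⟨Finset.mem_range.mpr ((Finset.mem_range.mp hj1).trans h), hj2⟩
      have hknot : k ∉ (Finset.range k).filter (fun j => x ∈ U j) := by
        simp [Finset.mem_filter]
      have hle := Finset.card_le_card hsub
      rw [Finset.card_insert_of_notMem hknot] at hle
      simp only [Set.mem_setOf_eq, hf_def] at hfk hfl
      omega
    intro k l hkl
    rcases lt_or_gt_of_ne hkl with h | h
    · exact key k l h
    · exact (key l k h).symm
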